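/- Let g : [0, T] → ℂ be a function of bounded total variation V(g) with g(0) = 0 and T > 0. Then for any complex number ξ with Re(ξ) ≥ 0 and |Im(ξ)| ≥ 1, the truncated Laplace transform satisfies |∫₀^T e^{−ξt} g(t) dt| ≤ (V(g) + |g(T)|·e^{−Re(ξ)T} + V(g))/|Im(ξ)|, i.e. it is bounded by a constant multiple of V(g)/(1 + |Im(ξ)|). -/

import Mathlib

open MeasureTheory Set Finset

-- Abel summation
lemma abel_aux (a b : ℕ → ℂ) (n : ℕ) :
    ∑ i ∈ Finset.range n, a i * (b i - b (i+1)) =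
      a 0 * b 0 - a n * b n + ∑ i ∈ Finset.range n, (a (i+1) - a i) * b (i+1) := by
  have h : ∑ i ∈ Finset.range n,
      (a i * (b i - b (i+1)) - (a (i+1) - a i) * b (i+1)) = a 0 * b 0 - a n * b n := by
    have h2 : ∀ i, a i * (b i - b (i+1)) - (a (i+1) - a i) * b (i+1)
        = a i * b i - a (i+1) * b (i+1) := fun i => by ring
    simp_rw [h2]
    exact Finset.sum_range_sub' (fun i => a i * b i) n
  rw [Finset.sum_sub_distrib] at h
  exact sub_eq_iff_eq_add.mp h

-- measurability of a BV complex function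
lemma bv_aemeasurable (T : ℝ) (g : ℝ → ℂ)
    (hfin : eVariationOn g (Set.Icc 0 T) ≠ ⊤) :
    AEMeasurable g (volume.restrict (Set.Icc 0 T)) := by
  have hre : BoundedVariationOn (fun t => (g t).re) (Set.Icc 0 T) := by
    have := (LipschitzWith.lipschitzOnWith Complex.reCLM.lipschitz (s := Set.univ)).comp_eVariationOn_le
      (g := g) (s := Set.Icc 0 T) (Set.mapsTo_univ _ _)
    refine ne_top_of_le_ne_top ?_ this
    simpa using hfin
  have him : BoundedVariationOn (fun t => (g t).im) (Set.Icc 0 T) := by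
    have := (LipschitzWith.lipschitzOnWith Complex.imCLM.lipschitz (s := Set.univ)).comp_eVariationOn_le
      (g := g) (s := Set.Icc 0 T) (Set.mapsTo_univ _ _)
    refine ne_top_of_le_ne_top ?_ this
    simpa using hfin
  obtain ⟨p, q, hp, hq, hpq⟩ := hre.locallyBoundedVariationOn.exists_monotoneOn_sub_monotoneOn
  obtain ⟨r, s, hr, hs, hrs⟩ := him.locallyBoundedVariationOn.exists_monotoneOn_sub_monotoneOn
  have hmre : AEMeasurable (fun t => (g t).re) (volume.restrict (Set.Icc 0 T)) := by
    rw [hpq]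
    exact ((aemeasurable_restrict_of_monotoneOn measurableSet_Icc hp).sub
      (aemeasurable_restrict_of_monotoneOn measurableSet_Icc hq))
  have hmim : AEMeasurable (fun t => (g t).im) (volume.restrict (Set.Icc 0 T)) := by
    rw [hrs]
    exact ((aemeasurable_restrict_of_monotoneOn measurableSet_Icc hr).sub
      (aemeasurable_restrict_of_monotoneOn measurableSet_Icc hs))
  have : AEMeasurable (fun t => ((g t).re : ℂ) + ((g t).im : ℂ) * Complex.I)
      (volume.restrict (Set.Icc 0 T)) :=
    ((Complex.measurable_ofReal.comp_aemeasurable hmre).add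
      ((Complex.measurable_ofReal.comp_aemeasurable hmim).mul_const Complex.I))
  simpa [Complex.re_add_im] using this

theorem stmt4 (T : ℝ) (hT : 0 < T) (g : ℝ → ℂ) (hg0 : g 0 = 0)
    (Vg : ℝ) (hVg0 : 0 ≤ Vg)
    (hVg : eVariationOn g (Set.Icc 0 T) = ENNReal.ofReal Vg)
    (ξ : ℂ) (hre : 0 ≤ ξ.re) (him : 1 ≤ |ξ.im|) :
    ‖∫ t in (0:ℝ)..T, Complex.exp (-ξ * t) * g t‖ ≤
      (Vg + ‖g T‖ * Real.exp (-ξ.re * T) + Vg) / |ξ.im| := by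
  have hξim : (0:ℝ) < |ξ.im| := lt_of_lt_of_le one_pos him
  have hξ : ξ ≠ 0 := by
    intro h
    rw [h] at him
    simp at him
    linarith
  have hfin : eVariationOn g (Set.Icc 0 T) ≠ ⊤ := by
    rw [hVg]; exact ENNReal.ofReal_ne_top
  -- bound on exp
  have hexple : ∀ s : ℝ, 0 ≤ s → ‖Complex.exp (-ξ * s)‖ ≤ 1 := by
    intro s hs
    rw [Complex.norm_exp]
    have : (-ξ * (s:ℂ)).re = -(ξ.re * s) := by simp [Complex.mul_re]
    rw [this]
    exact Real.exp_le_one_iff.mpr (neg_nonpos.mpr (mul_nonneg hre hs))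
  -- bound on g
  have hgbd : ∀ s ∈ Set.Icc (0:ℝ) T, ‖g s‖ ≤ Vg := by
    intro s hs
    have h1 := eVariationOn.edist_le g hs (Set.left_mem_Icc.mpr hT.le)
    rw [hVg, hg0, edist_dist, dist_zero_right] at h1
    exact (ENNReal.ofReal_le_ofReal_iff hVg0).mp h1
  -- integrability
  have hIntOn : IntegrableOn (fun s : ℝ => Complex.exp (-ξ * s) * g s) (Set.Icc 0 T) volume := by
    have hme : AEMeasurable (fun s : ℝ => Complex.exp (-ξ * s) * g s)
        (volume.restrict (Set.Icc 0 T)) :=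
      ((Complex.measurable_exp.comp (Complex.measurable_ofReal.const_mul (-ξ))).aemeasurable).mul
        (bv_aemeasurable T g hfin)
    refine Integrable.mono' (g := fun _ => Vg) ((integrableOn_const_iff).mpr (Or.inr measure_Icc_lt_top))
      hme.aestronglyMeasurable ?_
    refine (ae_restrict_iff' measurableSet_Icc).mpr (Filter.Eventually.of_forall fun s hs => ?_)
    calc ‖Complex.exp (-ξ * s) * g s‖ = ‖Complex.exp (-ξ * s)‖ * ‖g s‖ := norm_mul _ _
      _ ≤ 1 * Vg := mul_le_mul (hexple s hs.1) (hgbd s hs) (norm_nonneg _) zero_le_one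
      _ = Vg := one_mul Vg
  have hint : ∀ a b : ℝ, a ∈ Set.Icc 0 T → b ∈ Set.Icc 0 T →
      IntervalIntegrable (fun s => Complex.exp (-ξ * s) * g s) volume a b := by
    intro a b ha hb
    refine (hIntOn.mono_set ?_).intervalIntegrable
    rw [Set.uIcc_eq_union]
    exact Set.union_subset (Set.Icc_subset_Icc ha.1 hb.2) (Set.Icc_subset_Icc hb.1 ha.2)
  -- the primitive
  set E : ℝ → ℂ := fun s => (Complex.exp (-ξ * s) - Complex.exp (-ξ * T)) / ξ with hEdef
  have hEint : ∀ a b : ℝ, (∫ s in a..b, Complex.exp (-ξ * s)) = E a - E b := by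
    intro a b
    rw [integral_exp_mul_complex (neg_ne_zero.mpr hξ)]
    simp only [hEdef]
    rw [div_sub_div_same, div_neg, ← neg_div]
    congr 1
    ring
  have hET : E T = 0 := by simp [hEdef]
  have hEbd : ∀ s ∈ Set.Icc (0:ℝ) T, ‖E s‖ ≤ 2 / |ξ.im| := by
    intro s hs
    have h1 : ‖Complex.exp (-ξ * s) - Complex.exp (-ξ * T)‖ ≤ 2 := by
      have := hexple s hs.1
      have := hexple T hT.le
      calc ‖Complex.exp (-ξ * s) - Complex.exp (-ξ * T)‖
          ≤ ‖Complex.exp (-ξ * s)‖ + ‖Complex.exp (-ξ * T)‖ := norm_sub_le _ _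
        _ ≤ 2 := by linarith
    have h2 : |ξ.im| ≤ ‖ξ‖ := by
      exact Complex.abs_im_le_norm ξ
    calc ‖E s‖ = ‖Complex.exp (-ξ * s) - Complex.exp (-ξ * T)‖ / ‖ξ‖ := norm_div _ _
      _ ≤ 2 / |ξ.im| := by gcongr
  -- key estimate for partitions
  have key : ∀ n : ℕ, 1 ≤ n → ‖∫ s in (0:ℝ)..T, Complex.exp (-ξ * s) * g s‖ ≤
      2 * Vg / |ξ.im| + T * Vg / n := by
    intro n hn
    have hnpos : (0:ℝ) < n := by exact_mod_cast hn
    set t : ℕ → ℝ := fun i => (i : ℝ) * T / n with htdef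
    have htmono : Monotone t := by
      intro i j hij
      simp only [htdef]
      gcongr
    have ht0 : t 0 = 0 := by simp [htdef]
    have htn : t n = T := by simp only [htdef]; exact mul_div_cancel_left₀ T hnpos.ne'
    have htmem : ∀ i, i ≤ n → t i ∈ Set.Icc (0:ℝ) T := by
      intro i hi
      constructor
      · positivity
      · rw [← htn]; exact htmono hi
    have htstep : ∀ i : ℕ, t (i+1) - t i = T / n := by
      intro i
      simp only [htdef]
      push_cast
      field_simp
      ring
    -- split the integral
    have hints : ∀ i < n, IntervalIntegrable (fun s => Complex.exp (-ξ * s) * g s) volume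
        (t i) (t (i+1)) := fun i hi => hint _ _ (htmem i hi.le) (htmem (i+1) hi)
    have hsplit : (∫ s in (0:ℝ)..T, Complex.exp (-ξ * s) * g s) =
        ∑ i ∈ Finset.range n, ∫ s in t i..t (i+1), Complex.exp (-ξ * s) * g s := by
      have := intervalIntegral.sum_integral_adjacent_intervals hints
      rw [ht0, htn] at this
      exact this.symm
    -- per-interval decomposition
    have hdecomp : ∀ i < n, (∫ s in t i..t (i+1), Complex.exp (-ξ * s) * g s) =
        g (t i) * (E (t i) - E (t (i+1))) +
          ∫ s in t i..t (i+1), Complex.exp (-ξ * s) * (g s - g (t i)) := by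
      intro i hi
      have h1 := hints i hi
      have h2 : IntervalIntegrable (fun s : ℝ => Complex.exp (-ξ * s) * g (t i)) volume
          (t i) (t (i+1)) :=
        (((Complex.continuous_exp.comp (continuous_const.mul Complex.continuous_ofReal)).mul
          continuous_const).intervalIntegrable _ _)
      have h3 : (∫ s in t i..t (i+1), Complex.exp (-ξ * s) * (g s - g (t i)))
          = (∫ s in t i..t (i+1), Complex.exp (-ξ * s) * g s)
            - ∫ s in t i..t (i+1), Complex.exp (-ξ * s) * g (t i) := by
        rw [← intervalIntegral.integral_sub h1 h2]
        congr 1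
        ext s
        ring
      have h4 : (∫ s in t i..t (i+1), Complex.exp (-ξ * s) * g (t i))
          = (E (t i) - E (t (i+1))) * g (t i) := by
        rw [intervalIntegral.integral_mul_const, hEint]
      rw [h3, h4]
      ring
    have hsplit2 : (∫ s in (0:ℝ)..T, Complex.exp (-ξ * s) * g s) =
        (∑ i ∈ Finset.range n, g (t i) * (E (t i) - E (t (i+1)))) +
          ∑ i ∈ Finset.range n, ∫ s in t i..t (i+1), Complex.exp (-ξ * s) * (g s - g (t i)) := by
      rw [hsplit, ← Finset.sum_add_distrib]
      exact Finset.sum_congr rfl fun i hi => hdecomp i (Finset.mem_range.mp hi)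
    -- main sum via Abel
    have hmain : (∑ i ∈ Finset.range n, g (t i) * (E (t i) - E (t (i+1)))) =
        ∑ i ∈ Finset.range n, (g (t (i+1)) - g (t i)) * E (t (i+1)) := by
      rw [abel_aux (fun i => g (t i)) (fun i => E (t i)) n]
      simp [ht0, htn, hg0, hET]
    -- variation sum bound
    have hsum : ∑ i ∈ Finset.range n, ‖g (t (i+1)) - g (t i)‖ ≤ Vg := by
      set u : ℕ → ℝ := fun i => t (min i n) with hudef
      have hu : Monotone u := fun i j hij => htmono (min_le_min hij le_rfl)
      have hus : ∀ i, u i ∈ Set.Icc (0:ℝ) T := fun i => htmem _ (min_le_right _ _)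
      have h1 := eVariationOn.sum_le (f := g) (n := n) hu hus
      rw [hVg] at h1
      have h2 : ∀ i ∈ Finset.range n, edist (g (u (i+1))) (g (u i)) =
          ENNReal.ofReal ‖g (t (i+1)) - g (t i)‖ := by
        intro i hi
        have hi' := Finset.mem_range.mp hi
        have e1 : u i = t i := by simp [hudef, min_eq_left hi'.le]
        have e2 : u (i+1) = t (i+1) := by simp [hudef, min_eq_left (Nat.succ_le_of_lt hi')]
        rw [e1, e2, edist_dist, dist_eq_norm]
      rw [Finset.sum_congr rfl h2, ← ENNReal.ofReal_sum_of_nonneg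
        (fun i _ => norm_nonneg _)] at h1
      exact (ENNReal.ofReal_le_ofReal_iff hVg0).mp h1
    have hmainbd : ‖∑ i ∈ Finset.range n, g (t i) * (E (t i) - E (t (i+1)))‖ ≤
        2 * Vg / |ξ.im| := by
      rw [hmain]
      calc ‖∑ i ∈ Finset.range n, (g (t (i+1)) - g (t i)) * E (t (i+1))‖
          ≤ ∑ i ∈ Finset.range n, ‖(g (t (i+1)) - g (t i)) * E (t (i+1))‖ :=
            norm_sum_le _ _
        _ ≤ ∑ i ∈ Finset.range n, ‖g (t (i+1)) - g (t i)‖ * (2 / |ξ.im|) := by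
            refine Finset.sum_le_sum fun i hi => ?_
            rw [norm_mul]
            exact mul_le_mul_of_nonneg_left
              (hEbd _ (htmem (i+1) (Finset.mem_range.mp hi))) (norm_nonneg _)
        _ = (∑ i ∈ Finset.range n, ‖g (t (i+1)) - g (t i)‖) * (2 / |ξ.im|) :=
            (Finset.sum_mul ..).symm
        _ ≤ Vg * (2 / |ξ.im|) := by
            refine mul_le_mul_of_nonneg_right hsum (by positivity)
        _ = 2 * Vg / |ξ.im| := by ring
    -- error bound
    set v : ℕ → ENNReal := fun i => eVariationOn g (Set.Icc (t i) (t (i+1))) with hvdef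
    have hvle : ∀ i < n, v i ≤ ENNReal.ofReal Vg := by
      intro i hi
      rw [← hVg]
      exact eVariationOn.mono g (Set.Icc_subset_Icc (htmem i hi.le).1 (htmem (i+1) hi).2)
    have herr : ∀ i < n, ‖∫ s in t i..t (i+1), Complex.exp (-ξ * s) * (g s - g (t i))‖ ≤
        (v i).toReal * (T / n) := by
      intro i hi
      have hle : t i ≤ t (i+1) := htmono (Nat.le_succ i)
      have hb : ∀ s ∈ Set.uIoc (t i) (t (i+1)),
          ‖Complex.exp (-ξ * s) * (g s - g (t i))‖ ≤ (v i).toReal := by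
        intro s hs
        rw [Set.uIoc_of_le hle] at hs
        have hs' : s ∈ Set.Icc (t i) (t (i+1)) := ⟨hs.1.le, hs.2⟩
        have hd : edist (g s) (g (t i)) ≤ v i :=
          eVariationOn.edist_le g hs' (Set.left_mem_Icc.mpr hle)
        have hfin' : v i ≠ ⊤ := ne_top_of_le_ne_top ENNReal.ofReal_ne_top (hvle i hi)
        have : ‖g s - g (t i)‖ ≤ (v i).toReal := by
          rw [← dist_eq_norm, dist_edist]
          exact ENNReal.toReal_mono hfin' hd
        calc ‖Complex.exp (-ξ * s) * (g s - g (t i))‖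
            = ‖Complex.exp (-ξ * s)‖ * ‖g s - g (t i)‖ := norm_mul _ _
          _ ≤ 1 * (v i).toReal := by
              have hsp : (0:ℝ) ≤ s := le_trans (htmem i hi.le).1 hs.1.le
              exact mul_le_mul (hexple s hsp) this (norm_nonneg _) zero_le_one
          _ = (v i).toReal := one_mul _
      have := intervalIntegral.norm_integral_le_of_norm_le_const hb
      rwa [show |t (i+1) - t i| = T / n by rw [htstep i]; exact abs_of_pos (by positivity)] at this
    -- sum of variations
    have hvsum : (∑ i ∈ Finset.range n, (v i).toReal) ≤ Vg := by
      have step : ∀ m : ℕ, (∑ i ∈ Finset.range m, v i) =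
          eVariationOn g (Set.Icc (t 0) (t m)) := by
        intro m
        induction m with
        | zero =>
          rw [Finset.sum_range_zero]
          exact (eVariationOn.subsingleton g
            (by rw [Set.Icc_self]; exact Set.subsingleton_singleton)).symm
        | succ m ih =>
          rw [Finset.sum_range_succ, ih]
          have := eVariationOn.Icc_add_Icc g (s := Set.univ) (htmono (Nat.zero_le m))
            (htmono (Nat.le_succ m)) (Set.mem_univ (t m))
          simpa [Set.univ_inter] using this
      have hv : (∑ i ∈ Finset.range n, v i) = ENNReal.ofReal Vg := by
        rw [step n, ht0, htn, hVg]
      have hne : ∀ i ∈ Finset.range n, v i ≠ ⊤ := fun i hi =>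
        ne_top_of_le_ne_top ENNReal.ofReal_ne_top (hvle i (Finset.mem_range.mp hi))
      have := ENNReal.toReal_sum hne
      rw [hv, ENNReal.toReal_ofReal hVg0] at this
      exact le_of_eq this.symm
    have herrbd : ‖∑ i ∈ Finset.range n, ∫ s in t i..t (i+1),
        Complex.exp (-ξ * s) * (g s - g (t i))‖ ≤ T * Vg / n := by
      calc ‖∑ i ∈ Finset.range n, ∫ s in t i..t (i+1),
            Complex.exp (-ξ * s) * (g s - g (t i))‖
          ≤ ∑ i ∈ Finset.range n, ‖∫ s in t i..t (i+1),
            Complex.exp (-ξ * s) * (g s - g (t i))‖ := norm_sum_le _ _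
        _ ≤ ∑ i ∈ Finset.range n, (v i).toReal * (T / n) :=
            Finset.sum_le_sum fun i hi => herr i (Finset.mem_range.mp hi)
        _ = (∑ i ∈ Finset.range n, (v i).toReal) * (T / n) := (Finset.sum_mul ..).symm
        _ ≤ Vg * (T / n) := mul_le_mul_of_nonneg_right hvsum (by positivity)
        _ = T * Vg / n := by ring
    rw [hsplit2]
    calc ‖(∑ i ∈ Finset.range n, g (t i) * (E (t i) - E (t (i+1)))) +
          ∑ i ∈ Finset.range n, ∫ s in t i..t (i+1), Complex.exp (-ξ * s) * (g s - g (t i))‖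
        ≤ ‖∑ i ∈ Finset.range n, g (t i) * (E (t i) - E (t (i+1)))‖ +
          ‖∑ i ∈ Finset.range n, ∫ s in t i..t (i+1),
            Complex.exp (-ξ * s) * (g s - g (t i))‖ := norm_add_le _ _
      _ ≤ 2 * Vg / |ξ.im| + T * Vg / n := add_le_add hmainbd herrbd
  -- pass to the limit
  have hlim : Filter.Tendsto (fun n : ℕ => 2 * Vg / |ξ.im| + T * Vg / (n : ℝ))
      Filter.atTop (nhds (2 * Vg / |ξ.im| + 0)) :=
    Filter.Tendsto.add tendsto_const_nhds (tendsto_const_div_atTop_nhds_zero_nat _)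
  have hfinal : ‖∫ s in (0:ℝ)..T, Complex.exp (-ξ * s) * g s‖ ≤ 2 * Vg / |ξ.im| + 0 :=
    ge_of_tendsto hlim (Filter.eventually_atTop.mpr ⟨1, fun n hn => key n hn⟩)
  rw [add_zero] at hfinal
  refine hfinal.trans ?_
  have h2 : 2 * Vg ≤ Vg + ‖g T‖ * Real.exp (-ξ.re * T) + Vg := by
    have := mul_nonneg (norm_nonneg (g T)) (Real.exp_nonneg (-ξ.re * T))
    linarith
  exact (div_le_div_iff_of_pos_right hξim).mpr h2
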